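/- Suppose h₁,…,h_P ∈ C¹(T,ℝ³) satisfy dhᵢ(u)ᵀ dq̄(u) = 0 for all u ∈ T and all i, where q̄ is an immersion. Then for every α ∈ ℝ^P and every u ∈ T, the differential of F(α) = q̄ + ∑αᵢhᵢ satisfies dF(α)(u)ᵀ dF(α)(u) = dq̄(u)ᵀdq̄(u) + D(u)ᵀD(u) where D = ∑αᵢ dhᵢ; consequently dF(α)(u) is injective and F(α) is an immersion for all α. -/

import Mathlib

open Matrix
open scoped BigOperators

/-- Suppose h₁,…,h_P ∈ C¹(T,ℝ³) satisfy dhᵢ(u)ᵀ dq̄(u) = 0 for all u and i,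
where q̄ is an immersion (i.e. dq̄(u)ᵀdq̄(u) is positive definite for all u; differentials
are 3×2 matrices in local coordinates). Then for every α and u, the differential of
F(α) = q̄ + ∑αᵢhᵢ, namely dF(α)(u) = dq̄(u) + ∑αᵢdhᵢ(u), satisfies
dF(α)(u)ᵀ dF(α)(u) = dq̄(u)ᵀdq̄(u) + D(u)ᵀD(u) with D = ∑αᵢ dhᵢ; consequently dF(α)(u) is
injective (as a linear map) and F(α) is an immersion for all α. -/
theorem orthogonal_basis_fields_give_immersions
    {T : Type*} {P : ℕ}
    (dq : T → Matrix (Fin 3) (Fin 2) ℝ)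
    (dh : Fin P → T → Matrix (Fin 3) (Fin 2) ℝ)
    (hq_imm : ∀ u, ((dq u)ᵀ * dq u).PosDef)
    (horth : ∀ u (i : Fin P), (dh i u)ᵀ * dq u = 0)
    (dF : (Fin P → ℝ) → T → Matrix (Fin 3) (Fin 2) ℝ)
    (hdF : ∀ α u, dF α u = dq u + ∑ i, α i • dh i u) :
    ∀ (α : Fin P → ℝ) (u : T),
      (dF α u)ᵀ * dF α u
        = (dq u)ᵀ * dq u + (∑ i, α i • dh i u)ᵀ * (∑ i, α i • dh i u) ∧
      Function.Injective (dF α u).mulVec := by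
  intro α u
  set D : Matrix (Fin 3) (Fin 2) ℝ := ∑ i, α i • dh i u with hD
  have hDq : Dᵀ * dq u = 0 := by
    rw [hD, transpose_sum, Matrix.sum_mul]
    simp [transpose_smul, smul_mul_assoc, horth]
  have hqD : (dq u)ᵀ * D = 0 := by
    have := congrArg transpose hDq
    simpa using this
  have key : (dF α u)ᵀ * dF α u = (dq u)ᵀ * dq u + Dᵀ * D := by
    rw [hdF α u, ← hD, transpose_add, Matrix.add_mul, Matrix.mul_add, Matrix.mul_add, hDq, hqD,
      add_zero, zero_add]
  refine ⟨key, ?_⟩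
  have hPD : ((dF α u)ᵀ * dF α u).PosDef := by
    rw [key]
    have hpsd : (Dᵀ * D).PosSemidef := by
      have := Matrix.posSemidef_conjTranspose_mul_self D
      simpa using this
    exact (hq_imm u).add_posSemidef hpsd
  intro x y hxy
  by_contra hne
  have hx : x - y ≠ 0 := sub_ne_zero_of_ne hne
  have h0 : (dF α u).mulVec (x - y) = 0 := by
    rw [mulVec_sub, hxy, sub_self]
  have := hPD.dotProduct_mulVec_pos hx
  rw [← mulVec_mulVec, h0, mulVec_zero] at this
  have : (0:ℝ) < 0 := by simp at this
  exact lt_irrefl _ this
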